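/- Let σ : ℝ → ℝ be continuous with σ > 0, let β : ℝ → ℝ be continuous, locally of bounded variation, with β(0) = 0, and set Σ(x) := log(σ²(x)/σ²(0)) + 2∫_0^x (1/σ²(y)) dβ(y) (Lebesgue–Stieltjes integral). Then for every x ∈ ℝ, (σ²(x)/2) e^{−Σ(x)} − σ²(0)/2 + ∫_0^x e^{−Σ(y)} dβ(y) = 0. Equivalently, with h defined by h(0) = 0 and h'(x) = e^{−Σ(x)}, the extension of the operator L̂f(x) = (σ²(x)/2) f'(x) − (σ²(0)/2) f'(0) + ∫_0^x f' dβ to f ∈ C¹(ℝ) satisfies L̂h = 0. -/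

import Mathlib

open MeasureTheory Filter Topology Set

noncomputable section

/-- The Stieltjes integral `∫₀ˣ g dμ` of `g` against a (nonnegative) measure `μ`, with the
orientation convention `∫₀ˣ = −∫ₓ⁰` for `x < 0`. -/
def stInt (g : ℝ → ℝ) (μ : MeasureTheory.Measure ℝ) (x : ℝ) : ℝ :=
  if 0 ≤ x then ∫ y in Set.Ioc (0:ℝ) x, g y ∂μ else -∫ y in Set.Ioc x (0:ℝ), g y ∂μ

open scoped ENNReal NNReal

lemma cont_cdf (μ : Measure ℝ) [IsFiniteMeasure μ] [NullSingletonClass μ] :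
    Continuous fun y => (μ (Iic y)).toReal := by
  rw [continuous_iff_continuousAt]
  intro t
  have hrepr : ∀ y : ℝ, (μ (Iic y)).toReal = ∫ z, (Iic y).indicator (fun _ => (1:ℝ)) z ∂μ := by
    intro y
    rw [integral_indicator measurableSet_Iic]
    simp
    rfl
  have : ContinuousAt (fun y => ∫ z, (Iic y).indicator (fun _ => (1:ℝ)) z ∂μ) t := by
    apply tendsto_integral_filter_of_dominated_convergence (fun _ => (1:ℝ))
    · exact Eventually.of_forall fun y =>
        (aestronglyMeasurable_const.indicator measurableSet_Iic)
    · refine Eventually.of_forall fun y => Eventually.of_forall fun z => ?_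
      by_cases hz : z ∈ Iic y <;> simp [indicator_apply, hz]
    · exact integrable_const _
    · have hae : ∀ᵐ z ∂μ, z ≠ t := by
        have : μ {t} = 0 := measure_singleton t
        filter_upwards [measure_eq_zero_iff_ae_notMem.mp this] with z hz
        simpa using hz
      filter_upwards [hae] with z hz
      rcases lt_or_gt_of_ne hz with h | h
      · have : ∀ᶠ y in 𝓝 t, z ∈ Iic y := by
          have : ∀ᶠ y in 𝓝 t, z < y := eventually_gt_nhds h
          filter_upwards [this] with y hy using le_of_lt hy
        refine Tendsto.congr' ?_ tendsto_const_nhds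
        filter_upwards [this] with y hy
        simp [indicator_apply, hy, le_of_lt h]
      · have : ∀ᶠ y in 𝓝 t, z ∉ Iic y := by
          have : ∀ᶠ y in 𝓝 t, y < z := eventually_lt_nhds h
          filter_upwards [this] with y hy using not_le.mpr hy
        refine Tendsto.congr' ?_ tendsto_const_nhds
        filter_upwards [this] with y hy
        simp [indicator_apply, hy, not_le.mpr h]
  rw [show (fun y => (μ (Iic y)).toReal) = fun y => ∫ z, (Iic y).indicator (fun _ => (1:ℝ)) z ∂μ
    from funext hrepr]
  exact this

lemma key (μ₁ μ₂ : Measure ℝ) [IsFiniteMeasure μ₁] [IsFiniteMeasure μ₂]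
    [NullSingletonClass μ₁] [NullSingletonClass μ₂] {a b : ℝ} (hab : a ≤ b)
    (φ φ' : ℝ → ℝ) (hφ : ∀ t, HasDerivAt φ (φ' t) t) (hφ'c : Continuous φ')
    (A : ℝ → ℝ)
    (hA : ∀ y ∈ Icc a b, A y = A a + (μ₁ (Ioc a y)).toReal - (μ₂ (Ioc a y)).toReal) :
    (∫ y in Ioc a b, φ' (A y) ∂μ₁) - ∫ y in Ioc a b, φ' (A y) ∂μ₂
      = φ (A b) - φ (A a) := by
  rcases eq_or_lt_of_le hab with rfl | hlt
  · simp
  clear hab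
  set μ : Measure ℝ := μ₁ + μ₂ with hμ
  haveI : NullSingletonClass μ := ⟨fun t => by rw [hμ, Measure.add_apply, measure_singleton,
    measure_singleton, add_zero]⟩
  set B : ℝ → ℝ := fun y => (μ (Iic y)).toReal with hB
  have hBcont : Continuous B := cont_cdf μ
  -- difference formulas
  have hIic : ∀ (ν : Measure ℝ), IsFiniteMeasure ν → ∀ y z : ℝ, y ≤ z →
      (ν (Iic z)).toReal - (ν (Iic y)).toReal = (ν (Ioc y z)).toReal := by
    intro ν hν y z hyz
    rw [← Iic_union_Ioc_eq_Iic hyz, measure_union (Iic_disjoint_Ioc le_rfl) measurableSet_Ioc,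
      ENNReal.toReal_add (measure_ne_top ν _) (measure_ne_top ν _)]
    ring
  have hIoc : ∀ (ν : Measure ℝ), IsFiniteMeasure ν → ∀ y z w : ℝ, y ≤ z → z ≤ w →
      (ν (Ioc y w)).toReal = (ν (Ioc y z)).toReal + (ν (Ioc z w)).toReal := by
    intro ν hν y z w h1 h2
    rw [← Ioc_union_Ioc_eq_Ioc h1 h2, measure_union (Ioc_disjoint_Ioc_of_le le_rfl) measurableSet_Ioc,
      ENNReal.toReal_add (measure_ne_top ν _) (measure_ne_top ν _)]
  have hBmono : MonotoneOn B (Icc a b) := by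
    intro y hy z hz hyz
    have := hIic μ (by infer_instance) y z hyz
    have h0 : (0:ℝ) ≤ (μ (Ioc y z)).toReal := ENNReal.toReal_nonneg
    linarith
  have hBd : ∀ y z : ℝ, y ≤ z → B z - B y = (μ (Ioc y z)).toReal :=
    fun y z h => hIic μ (by infer_instance) y z h
  have hμsplit : ∀ y z : ℝ, (μ (Ioc y z)).toReal
      = (μ₁ (Ioc y z)).toReal + (μ₂ (Ioc y z)).toReal := by
    intro y z
    rw [hμ, Measure.add_apply, ENNReal.toReal_add (measure_ne_top μ₁ _) (measure_ne_top μ₂ _)]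
  have hAd : ∀ y z : ℝ, a ≤ y → y ≤ z → z ≤ b →
      A z - A y = (μ₁ (Ioc y z)).toReal - (μ₂ (Ioc y z)).toReal := by
    intro y z h1 h2 h3
    rw [hA y ⟨h1, h2.trans h3⟩, hA z ⟨h1.trans h2, h3⟩,
      hIoc μ₁ (by infer_instance) a y z h1 h2, hIoc μ₂ (by infer_instance) a y z h1 h2]
    ring
  have hABd : ∀ y z : ℝ, a ≤ y → y ≤ z → z ≤ b → |A z - A y| ≤ B z - B y := by
    intro y z h1 h2 h3
    rw [hAd y z h1 h2 h3, hBd y z h2, hμsplit]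
    have n1 : (0:ℝ) ≤ (μ₁ (Ioc y z)).toReal := ENNReal.toReal_nonneg
    have n2 : (0:ℝ) ≤ (μ₂ (Ioc y z)).toReal := ENNReal.toReal_nonneg
    rw [abs_le]; constructor <;> linarith
  -- range bound
  have hBa_nonneg : 0 ≤ B a := ENNReal.toReal_nonneg
  set R : ℝ := |A a| + (B b - B a) with hR
  have hrange : ∀ y ∈ Icc a b, |A y| ≤ R := by
    intro y hy
    have h1 : |A y - A a| ≤ B y - B a := hABd a y le_rfl hy.1 hy.2
    have h2 : B y ≤ B b := hBmono ⟨hy.1, hy.2⟩ ⟨hlt.le, le_rfl⟩ hy.2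
    calc |A y| ≤ |A a| + |A y - A a| := by
          have := abs_add_le (A a) (A y - A a); simpa using this
      _ ≤ R := by rw [hR]; linarith
  set K : Set ℝ := Icc (-R) R with hK
  have hKconv : Convex ℝ K := convex_Icc _ _
  have hKmem : ∀ y ∈ Icc a b, A y ∈ K := fun y hy => abs_le.mp (hrange y hy)
  obtain ⟨C, hC⟩ : ∃ C, ∀ s ∈ K, ‖φ' s‖ ≤ C :=
    isCompact_Icc.exists_bound_of_continuousOn hφ'c.continuousOn
  -- measurable version of A and integrability
  set Am : ℝ → ℝ := fun y => A a + (μ₁ (Ioc a y)).toReal - (μ₂ (Ioc a y)).toReal with hAm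
  have hmono : ∀ (ν : Measure ℝ), IsFiniteMeasure ν →
      Monotone fun y => (ν (Ioc a y)).toReal := by
    intro ν hν y z hyz
    exact ENNReal.toReal_mono (measure_ne_top ν _) (measure_mono (Ioc_subset_Ioc_right hyz))
  have hAmmeas : Measurable Am := by
    exact ((measurable_const.add (hmono μ₁ (by infer_instance)).measurable).sub
      (hmono μ₂ (by infer_instance)).measurable)
  have hint : ∀ (ν : Measure ℝ), IsFiniteMeasure ν → ν ≤ μ →
      IntegrableOn (fun y => φ' (A y)) (Ioc a b) ν := by
    intro ν hν hle
    have hae : (fun y => φ' (A y)) =ᵐ[ν.restrict (Ioc a b)] fun y => φ' (Am y) := by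
      filter_upwards [ae_restrict_mem measurableSet_Ioc] with y hy
      rw [hA y (Ioc_subset_Icc_self hy)]
    refine Integrable.mono' (integrable_const C)
      (((hφ'c.measurable.comp hAmmeas).aestronglyMeasurable).congr hae.symm) ?_
    filter_upwards [ae_restrict_mem measurableSet_Ioc] with y hy
    exact hC _ (hKmem y (Ioc_subset_Icc_self hy))
  have hint1 : IntegrableOn (fun y => φ' (A y)) (Ioc a b) μ₁ :=
    hint μ₁ (by infer_instance) (Measure.le_add_right le_rfl)
  have hint2 : IntegrableOn (fun y => φ' (A y)) (Ioc a b) μ₂ :=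
    hint μ₂ (by infer_instance) (Measure.le_add_left le_rfl)
  -- the partial integral
  set G : ℝ → ℝ := fun y => (∫ z in Ioc a y, φ' (A z) ∂μ₁) - ∫ z in Ioc a y, φ' (A z) ∂μ₂
    with hG
  have hGd : ∀ y z : ℝ, a ≤ y → y ≤ z → z ≤ b →
      G z - G y = (∫ w in Ioc y z, φ' (A w) ∂μ₁) - ∫ w in Ioc y z, φ' (A w) ∂μ₂ := by
    intro y z h1 h2 h3
    have hsplit : ∀ (ν : Measure ℝ), IntegrableOn (fun w => φ' (A w)) (Ioc a b) ν →
        (∫ w in Ioc a z, φ' (A w) ∂ν)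
          = (∫ w in Ioc a y, φ' (A w) ∂ν) + ∫ w in Ioc y z, φ' (A w) ∂ν := by
      intro ν hintν
      rw [← Ioc_union_Ioc_eq_Ioc h1 h2]
      exact setIntegral_union (Ioc_disjoint_Ioc_of_le le_rfl) measurableSet_Ioc
        (hintν.mono_set (Ioc_subset_Ioc_right (h2.trans h3)))
        (hintν.mono_set (Ioc_subset_Ioc h1 h3))
    rw [hG]
    simp only []
    rw [hsplit μ₁ hint1, hsplit μ₂ hint2]
    ring
  -- main estimate
  have main : ∀ ε : ℝ, 0 < ε → |φ (A b) - φ (A a) - G b| ≤ 2 * ε * (B b - B a) := by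
    intro ε hε
    -- uniform continuity of φ' on K
    obtain ⟨δ, hδpos, hδ⟩ : ∃ δ > 0, ∀ s ∈ K, ∀ u ∈ K, |s - u| < δ → |φ' s - φ' u| ≤ ε := by
      have hUC := isCompact_Icc.uniformContinuousOn_of_continuous
        (hφ'c.continuousOn : ContinuousOn φ' K)
      rcases Metric.uniformContinuousOn_iff.mp hUC ε hε with ⟨δ, hδpos, hδ⟩
      exact ⟨δ, hδpos, fun s hs u hu h => le_of_lt (by
        have := hδ s hs u hu (by rwa [Real.dist_eq]); rwa [Real.dist_eq] at this)⟩
    -- uniform continuity of B on [a, b]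
    obtain ⟨δ₂, hδ₂pos, hδ₂⟩ : ∃ δ₂ > 0, ∀ y ∈ Icc a b, ∀ z ∈ Icc a b,
        |y - z| < δ₂ → |B y - B z| < δ := by
      have hUB := isCompact_Icc.uniformContinuousOn_of_continuous
        (hBcont.continuousOn : ContinuousOn B (Icc a b))
      rcases Metric.uniformContinuousOn_iff.mp hUB δ hδpos with ⟨δ₂, hδ₂pos, hδ₂⟩
      exact ⟨δ₂, hδ₂pos, fun y hy z hz h => by
        have := hδ₂ y hy z hz (by rwa [Real.dist_eq]); rwa [Real.dist_eq] at this⟩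
    -- choose the partition
    obtain ⟨n, hn⟩ := exists_nat_gt ((b - a) / δ₂)
    have hnpos : (0:ℝ) < n := lt_trans (div_pos (by linarith) hδ₂pos) hn
    have hmeshpos : 0 < (b - a) / n := div_pos (by linarith) hnpos
    have hmeshlt : (b - a) / n < δ₂ := by
      rw [div_lt_iff₀ hnpos]
      have := (div_lt_iff₀ hδ₂pos).mp hn
      nlinarith
    set t : ℕ → ℝ := fun i => a + i * ((b - a) / n) with htdef
    have ht0 : t 0 = a := by simp [htdef]
    have htn : t n = b := by
      simp only [htdef]
      field_simp
      ring
    have htstep : ∀ i : ℕ, t (i + 1) - t i = (b - a) / n := by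
      intro i
      simp only [htdef]
      push_cast
      ring
    have htmono : ∀ i : ℕ, t i ≤ t (i + 1) := by
      intro i
      simp only [htdef]
      push_cast
      nlinarith [hmeshpos]
    have htmem : ∀ i : ℕ, i ≤ n → t i ∈ Icc a b := by
      intro i hi
      constructor
      · simp only [htdef]
        nlinarith [hmeshpos, (Nat.cast_nonneg i : (0:ℝ) ≤ i)]
      · have : t i ≤ t n := by
          simp only [htdef]
          have : (i:ℝ) ≤ n := Nat.cast_le.mpr hi
          nlinarith [hmeshpos]
        rwa [htn] at this
    -- per-interval estimate
    have hstep : ∀ i : ℕ, i < n →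
        |(φ (A (t (i+1))) - φ (A (t i))) - (G (t (i+1)) - G (t i))|
          ≤ 2 * ε * (B (t (i+1)) - B (t i)) := by
      intro i hi
      set p := t i with hp'
      set q := t (i + 1) with hq'
      have hp : p ∈ Icc a b := htmem i (le_of_lt hi)
      have hq : q ∈ Icc a b := htmem (i+1) (Nat.succ_le_of_lt hi)
      have hpq : p ≤ q := htmono i
      have hBmono' : B p ≤ B q := hBmono hp hq hpq
      have hBpq : B q - B p < δ := by
        have := hδ₂ q hq p hp (by rw [hq', hp', htstep i, abs_of_pos hmeshpos]; exact hmeshlt)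
        rw [abs_of_nonneg (by linarith)] at this
        exact this
      have hApq : |A q - A p| ≤ B q - B p := hABd p q hp.1 hpq hq.2
      have hApK : A p ∈ K := hKmem p hp
      have hAqK : A q ∈ K := hKmem q hq
      set c := φ' (A p) with hc
      -- Taylor/MVT estimate
      have step1 : |φ (A q) - φ (A p) - c * (A q - A p)| ≤ ε * (B q - B p) := by
        have hsub : uIcc (A p) (A q) ⊆ K := uIcc_subset_Icc hApK hAqK
        have hψ : ∀ w : ℝ, HasDerivAt (fun y => φ y - c * y) (φ' w - c) w := by
          intro w
          exact (hφ w).sub (by simpa using (hasDerivAt_id w).const_mul c)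
        have hbd : ∀ w ∈ uIcc (A p) (A q), ‖φ' w - c‖ ≤ ε := by
          intro w hw
          rw [Real.norm_eq_abs]
          refine hδ w (hsub hw) (A p) hApK ?_
          calc |w - A p| ≤ |A q - A p| := abs_sub_left_of_mem_uIcc hw
            _ ≤ B q - B p := hApq
            _ < δ := hBpq
        have hMVT := (convex_uIcc (A p) (A q)).norm_image_sub_le_of_norm_hasDerivWithin_le
          (fun w hw => (hψ w).hasDerivWithinAt) hbd left_mem_uIcc right_mem_uIcc
        rw [Real.norm_eq_abs, Real.norm_eq_abs] at hMVT
        calc |φ (A q) - φ (A p) - c * (A q - A p)|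
            = |(φ (A q) - c * A q) - (φ (A p) - c * A p)| := by ring_nf
          _ ≤ ε * |A q - A p| := hMVT
          _ ≤ ε * (B q - B p) := mul_le_mul_of_nonneg_left hApq hε.le
      -- constant integral identity
      have step2 : c * (A q - A p)
          = (∫ _ in Ioc p q, c ∂μ₁) - ∫ _ in Ioc p q, c ∂μ₂ := by
        rw [setIntegral_const, setIntegral_const, smul_eq_mul, smul_eq_mul,
          hAd p q hp.1 hpq hq.2]
        simp only [measureReal_def]
        ring
      -- comparison of constant with actual integrand
      have step3 : ∀ (ν : Measure ℝ), IsFiniteMeasure ν →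
          IntegrableOn (fun y => φ' (A y)) (Ioc a b) ν →
          |(∫ _ in Ioc p q, c ∂ν) - ∫ w in Ioc p q, φ' (A w) ∂ν|
            ≤ ε * (ν (Ioc p q)).toReal := by
        intro ν hν hintν
        have hJsub : Ioc p q ⊆ Ioc a b := Ioc_subset_Ioc hp.1 hq.2
        rw [← integral_sub (integrableOn_const (C := c) (measure_lt_top ν (Ioc p q)).ne)
          (hintν.mono_set hJsub)]
        rw [← Real.norm_eq_abs]
        apply norm_setIntegral_le_of_norm_le_const (measure_lt_top ν _)
        intro w hw
        have hwmem : w ∈ Icc a b := ⟨hp.1.trans hw.1.le, hw.2.trans hq.2⟩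
        rw [Real.norm_eq_abs]
        refine hδ (A p) hApK (A w) (hKmem w hwmem) ?_
        have h1 : |A w - A p| ≤ B w - B p := hABd p w hp.1 hw.1.le hwmem.2
        have h2 : B w ≤ B q := hBmono hwmem ⟨hp.1.trans hpq, hq.2⟩ hw.2
        have : |A p - A w| = |A w - A p| := abs_sub_comm _ _
        rw [this]
        linarith
      -- combine
      have hG' := hGd p q hp.1 hpq hq.2
      have hsum31 := step3 μ₁ (by infer_instance) hint1
      have hsum32 := step3 μ₂ (by infer_instance) hint2
      have hmeq : (μ₁ (Ioc p q)).toReal + (μ₂ (Ioc p q)).toReal = B q - B p := by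
        rw [hBd p q hpq, hμsplit]
      have decomp : (φ (A q) - φ (A p)) - (G q - G p)
          = (φ (A q) - φ (A p) - c * (A q - A p))
            + ((∫ _ in Ioc p q, c ∂μ₁) - ∫ w in Ioc p q, φ' (A w) ∂μ₁)
            - ((∫ _ in Ioc p q, c ∂μ₂) - ∫ w in Ioc p q, φ' (A w) ∂μ₂) := by
        rw [hG']
        linarith [step2]
      rw [decomp]
      have tri : ∀ x y z : ℝ, |x + y - z| ≤ |x| + |y| + |z| := by
        intro x y z
        calc |x + y - z| = |(x + y) + (-z)| := by rw [sub_eq_add_neg]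
          _ ≤ |x + y| + |(-z)| := abs_add_le _ _
          _ = |x + y| + |z| := by rw [abs_neg]
          _ ≤ |x| + |y| + |z| := by linarith [abs_add_le x y]
      calc |(φ (A q) - φ (A p) - c * (A q - A p))
            + ((∫ _ in Ioc p q, c ∂μ₁) - ∫ w in Ioc p q, φ' (A w) ∂μ₁)
            - ((∫ _ in Ioc p q, c ∂μ₂) - ∫ w in Ioc p q, φ' (A w) ∂μ₂)|
          ≤ |φ (A q) - φ (A p) - c * (A q - A p)|
            + |(∫ _ in Ioc p q, c ∂μ₁) - ∫ w in Ioc p q, φ' (A w) ∂μ₁|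
            + |(∫ _ in Ioc p q, c ∂μ₂) - ∫ w in Ioc p q, φ' (A w) ∂μ₂| := tri _ _ _
        _ ≤ ε * (B q - B p) + ε * (μ₁ (Ioc p q)).toReal + ε * (μ₂ (Ioc p q)).toReal :=
            add_le_add (add_le_add step1 hsum31) hsum32
        _ = 2 * ε * (B q - B p) := by
            have : ε * (μ₁ (Ioc p q)).toReal + ε * (μ₂ (Ioc p q)).toReal
                = ε * (B q - B p) := by rw [← hmeq]; ring
            linarith
    -- sum up
    have hGa : G a = 0 := by simp [hG]
    have hsum : ∑ i ∈ Finset.range n,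
        ((φ (A (t (i+1))) - φ (A (t i))) - (G (t (i+1)) - G (t i)))
          = φ (A b) - φ (A a) - G b := by
      rw [Finset.sum_sub_distrib, Finset.sum_range_sub (fun i => φ (A (t i))),
        Finset.sum_range_sub (fun i => G (t i)), ht0, htn, hGa]
      ring
    calc |φ (A b) - φ (A a) - G b|
        = |∑ i ∈ Finset.range n,
            ((φ (A (t (i+1))) - φ (A (t i))) - (G (t (i+1)) - G (t i)))| := by rw [hsum]
      _ ≤ ∑ i ∈ Finset.range n,
            |(φ (A (t (i+1))) - φ (A (t i))) - (G (t (i+1)) - G (t i))| :=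
          Finset.abs_sum_le_sum_abs _ _
      _ ≤ ∑ i ∈ Finset.range n, 2 * ε * (B (t (i+1)) - B (t i)) :=
          Finset.sum_le_sum (fun i hi => hstep i (Finset.mem_range.mp hi))
      _ = 2 * ε * (B b - B a) := by
          rw [← Finset.mul_sum, Finset.sum_range_sub (fun i => B (t i)), ht0, htn]
  have hGb : G b = φ (A b) - φ (A a) := by
    by_contra hne
    have hpos : 0 < |φ (A b) - φ (A a) - G b| := by
      rw [abs_pos, sub_ne_zero]; exact fun h => hne h.symm
    have hBb : 0 ≤ B b - B a := by
      have := hBmono ⟨le_rfl, hlt.le⟩ ⟨hlt.le, le_rfl⟩ hlt.le; linarith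
    rcases eq_or_lt_of_le hBb with hBe | hBl
    · have := main 1 one_pos
      rw [← hBe] at this; simp at this
      exact hne (by linarith)
    · have h2 : 2 * (|φ (A b) - φ (A a) - G b| / (4 * (B b - B a))) * (B b - B a)
          = |φ (A b) - φ (A a) - G b| / 2 := by
        field_simp
        ring
      have h3 := main (|φ (A b) - φ (A a) - G b| / (4 * (B b - B a)))
        (div_pos hpos (by linarith))
      rw [h2] at h3
      linarith
  rw [← hGb, hG]

/-- A continuous Stieltjes function has an atomless measure. -/
lemma stieltjes_noAtoms (γ : StieltjesFunction ℝ) (hγ : Continuous fun x => γ x) :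
    NullSingletonClass γ.measure := by
  constructor
  intro t
  rw [γ.measure_singleton]
  have hll : Function.leftLim (fun x => γ x) t = γ t :=
    leftLim_eq_of_tendsto (h := nhdsLT_neBot t)
      ((hγ.tendsto t).mono_left nhdsWithin_le_nhds)
  rw [show Function.leftLim (⇑γ) t = γ t from hll]
  simp

/-- withDensity measure vs set integral. -/
lemma withDensity_toReal (γ : StieltjesFunction ℝ) {g : ℝ → ℝ} (hg : Continuous g)
    (hg0 : ∀ y, 0 ≤ g y) {a b : ℝ} {s : Set ℝ} (hs : MeasurableSet s) (hsub : s ⊆ Ioc a b) :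
    (((γ.measure.restrict (Ioc a b)).withDensity fun y => ENNReal.ofReal (g y)) s).toReal
      = ∫ y in s, g y ∂γ.measure := by
  rw [withDensity_apply _ hs, Measure.restrict_restrict hs, inter_eq_self_of_subset_left hsub,
    integral_eq_lintegral_of_nonneg_ae (Eventually.of_forall hg0)
      (hg.aestronglyMeasurable)]

/-- The core computation: `∫ₐᵇ e dβ₁ − ∫ₐᵇ e dβ₂ = σ₀²(e^{−2A(a)} − e^{−2A(b)})/2`. -/
lemma step (σ : ℝ → ℝ) (hσc : Continuous σ) (hσpos : ∀ x, 0 < σ x)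
    (β₁ β₂ : StieltjesFunction ℝ) (hβ₁ : Continuous fun x => β₁ x)
    (hβ₂ : Continuous fun x => β₂ x)
    (A : ℝ → ℝ) (e : ℝ → ℝ)
    (he : ∀ y, e y = σ 0 ^ 2 * ((σ y ^ 2)⁻¹ * Real.exp (-2 * A y)))
    {a b : ℝ} (hab : a ≤ b)
    (hA : ∀ y ∈ Icc a b, A y = A a + (∫ z in Ioc a y, (σ z ^ 2)⁻¹ ∂β₁.measure)
        - ∫ z in Ioc a y, (σ z ^ 2)⁻¹ ∂β₂.measure) :
    (∫ z in Ioc a b, e z ∂β₁.measure) - (∫ z in Ioc a b, e z ∂β₂.measure)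
      = σ 0 ^ 2 * (Real.exp (-2 * A a) / 2 - Real.exp (-2 * A b) / 2) := by
  set g : ℝ → ℝ := fun y => (σ y ^ 2)⁻¹ with hgdef
  have hgc : Continuous g := (hσc.pow 2).inv₀ (fun y => (pow_pos (hσpos y) 2).ne')
  have hg0 : ∀ y, 0 ≤ g y := fun y => inv_nonneg.mpr (sq_nonneg _)
  set dens : ℝ → ℝ≥0∞ := fun y => ENNReal.ofReal (g y) with hdens
  set μ₁' : Measure ℝ := (β₁.measure.restrict (Ioc a b)).withDensity dens with hμ₁'
  set μ₂' : Measure ℝ := (β₂.measure.restrict (Ioc a b)).withDensity dens with hμ₂'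
  -- finiteness
  obtain ⟨C, hC⟩ : ∃ C, ∀ y ∈ Icc a b, ‖g y‖ ≤ C :=
    isCompact_Icc.exists_bound_of_continuousOn hgc.continuousOn
  have hfin : ∀ (γ : StieltjesFunction ℝ),
      IsFiniteMeasure ((γ.measure.restrict (Ioc a b)).withDensity dens) := by
    intro γ
    constructor
    rw [withDensity_apply _ MeasurableSet.univ, Measure.restrict_univ]
    calc ∫⁻ y, dens y ∂(γ.measure.restrict (Ioc a b))
        = ∫⁻ y in Ioc a b, dens y ∂γ.measure := by
          rw [← Measure.restrict_univ (μ := γ.measure.restrict (Ioc a b)),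
            Measure.restrict_restrict MeasurableSet.univ, univ_inter]
      _ ≤ ∫⁻ _ in Ioc a b, ENNReal.ofReal C ∂γ.measure := by
          refine setLIntegral_mono' measurableSet_Ioc (fun y hy => ?_)
          exact ENNReal.ofReal_le_ofReal
            ((le_abs_self _).trans (le_of_eq (Real.norm_eq_abs _).symm) |>.trans
              (hC y (Ioc_subset_Icc_self hy)))
      _ = ENNReal.ofReal C * γ.measure (Ioc a b) := by rw [setLIntegral_const]
      _ < ⊤ := ENNReal.mul_lt_top ENNReal.ofReal_lt_top measure_Ioc_lt_top
  haveI hfin1 : IsFiniteMeasure μ₁' := hfin β₁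
  haveI hfin2 : IsFiniteMeasure μ₂' := hfin β₂
  -- no atoms
  have hna : ∀ (γ : StieltjesFunction ℝ), Continuous (fun x => γ x) →
      NullSingletonClass ((γ.measure.restrict (Ioc a b)).withDensity dens) := by
    intro γ hγ
    haveI := stieltjes_noAtoms γ hγ
    constructor
    intro t
    rw [withDensity_apply _ (measurableSet_singleton t)]
    refine setLIntegral_measure_zero _ _ ?_
    rw [Measure.restrict_apply (measurableSet_singleton t)]
    exact measure_mono_null inter_subset_left (measure_singleton t)
  haveI hna1 : NullSingletonClass μ₁' := hna β₁ hβ₁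
  haveI hna2 : NullSingletonClass μ₂' := hna β₂ hβ₂
  -- apply the key lemma
  have hA' : ∀ y ∈ Icc a b, A y = A a + (μ₁' (Ioc a y)).toReal - (μ₂' (Ioc a y)).toReal := by
    intro y hy
    rw [hμ₁', hμ₂', withDensity_toReal β₁ hgc hg0 measurableSet_Ioc (Ioc_subset_Ioc_right hy.2),
      withDensity_toReal β₂ hgc hg0 measurableSet_Ioc (Ioc_subset_Ioc_right hy.2)]
    exact hA y hy
  have hφ : ∀ t : ℝ, HasDerivAt (fun s => -Real.exp (-2 * s) / 2) (Real.exp (-2 * t)) t := by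
    intro t
    have h1 : HasDerivAt (fun s : ℝ => -2 * s) (-2) t := by
      simpa using (hasDerivAt_id t).const_mul (-2 : ℝ)
    have h2 := (h1.exp).neg.div_const (2 : ℝ)
    exact h2.congr_deriv (by ring)
  have hkey := key μ₁' μ₂' hab (fun s => -Real.exp (-2 * s) / 2) (fun s => Real.exp (-2 * s))
    hφ (Real.continuous_exp.comp (continuous_const.mul continuous_id)) A hA'
  -- convert the withDensity integrals back
  have hconv : ∀ (γ : StieltjesFunction ℝ),
      (∫ y in Ioc a b, Real.exp (-2 * A y) ∂((γ.measure.restrict (Ioc a b)).withDensity dens))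
        = ∫ z in Ioc a b, g z * Real.exp (-2 * A z) ∂γ.measure := by
    intro γ
    have hrr : ((γ.measure.restrict (Ioc a b)).withDensity dens).restrict (Ioc a b)
        = (γ.measure.restrict (Ioc a b)).withDensity dens := by
      rw [restrict_withDensity measurableSet_Ioc, Measure.restrict_restrict measurableSet_Ioc,
        inter_self]
    rw [show (∫ y in Ioc a b, Real.exp (-2 * A y)
          ∂((γ.measure.restrict (Ioc a b)).withDensity dens))
        = ∫ y, Real.exp (-2 * A y) ∂(((γ.measure.restrict (Ioc a b)).withDensity dens).restrict
            (Ioc a b)) from rfl, hrr]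
    have hmeas : Measurable fun y => Real.toNNReal (g y) :=
      measurable_real_toNNReal.comp hgc.measurable
    have : (∫ y, Real.exp (-2 * A y) ∂((γ.measure.restrict (Ioc a b)).withDensity
          fun y => ((Real.toNNReal (g y) : ℝ≥0) : ℝ≥0∞)))
        = ∫ y, Real.toNNReal (g y) • Real.exp (-2 * A y) ∂(γ.measure.restrict (Ioc a b)) :=
      integral_withDensity_eq_integral_smul hmeas _
    rw [show dens = fun y => ((Real.toNNReal (g y) : ℝ≥0) : ℝ≥0∞) from rfl, this]
    refine setIntegral_congr_fun measurableSet_Ioc (fun y _ => ?_)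
    rw [NNReal.smul_def, Real.coe_toNNReal _ (hg0 y), smul_eq_mul]
  have he' : ∀ (γ : StieltjesFunction ℝ), (∫ z in Ioc a b, e z ∂γ.measure)
      = σ 0 ^ 2 * ∫ z in Ioc a b, g z * Real.exp (-2 * A z) ∂γ.measure := by
    intro γ
    rw [← integral_const_mul]
    exact setIntegral_congr_fun measurableSet_Ioc (fun y _ => he y)
  rw [he' β₁, he' β₂, ← hconv β₁, ← hconv β₂, ← hμ₁', ← hμ₂']
  have : (∫ y in Ioc a b, Real.exp (-2 * A y) ∂μ₁') - ∫ y in Ioc a b, Real.exp (-2 * A y) ∂μ₂'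
      = -Real.exp (-2 * A b) / 2 - -Real.exp (-2 * A a) / 2 := hkey
  rw [← mul_sub, this]
  ring

/-- Example 4(ii), `L̂h = 0`: with `β` continuous and locally of bounded
variation (written as `β = β₁ − β₂` with `β₁, β₂` continuous Stieltjes functions),
`β(0) = 0`, and `Σ(x) = log(σ²(x)/σ²(0)) + 2∫₀ˣ σ⁻² dβ`, one has for every `x`:
`(σ²(x)/2) e^{−Σ(x)} − σ²(0)/2 + ∫₀ˣ e^{−Σ} dβ = 0`. -/
theorem statement19 (σ : ℝ → ℝ) (hσc : Continuous σ) (hσpos : ∀ x, 0 < σ x)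
    (β₁ β₂ : StieltjesFunction ℝ) (hβ₁ : Continuous fun x => β₁ x)
    (hβ₂ : Continuous fun x => β₂ x)
    (β : ℝ → ℝ) (hβ : ∀ x, β x = β₁ x - β₂ x) (hβ0 : β 0 = 0)
    (Sg : ℝ → ℝ)
    (hSgdef : ∀ x, Sg x = Real.log (σ x ^ 2 / σ 0 ^ 2)
      + 2 * (stInt (fun y => (σ y ^ 2)⁻¹) β₁.measure x
              - stInt (fun y => (σ y ^ 2)⁻¹) β₂.measure x)) :
    ∀ x, σ x ^ 2 / 2 * Real.exp (-Sg x) - σ 0 ^ 2 / 2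
      + (stInt (fun y => Real.exp (-Sg y)) β₁.measure x
          - stInt (fun y => Real.exp (-Sg y)) β₂.measure x) = 0 := by
  intro x
  set g : ℝ → ℝ := fun y => (σ y ^ 2)⁻¹ with hgdef
  set A : ℝ → ℝ := fun y => stInt g β₁.measure y - stInt g β₂.measure y with hAdef
  have hA0 : A 0 = 0 := by simp [hAdef, stInt]
  have hσ2pos : ∀ y, (0:ℝ) < σ y ^ 2 := fun y => pow_pos (hσpos y) 2
  have he : ∀ y, Real.exp (-Sg y) = σ 0 ^ 2 * ((σ y ^ 2)⁻¹ * Real.exp (-2 * A y)) := by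
    intro y
    rw [hSgdef y, neg_add, Real.exp_add, Real.exp_neg,
      Real.exp_log (div_pos (hσ2pos y) (hσ2pos 0))]
    have h1 : -(2 * (stInt g β₁.measure y - stInt g β₂.measure y)) = -2 * A y := by
      rw [hAdef]; ring
    rw [h1, inv_div]
    field_simp
  rcases le_or_gt 0 x with hx | hx
  · -- case 0 ≤ x
    have hA : ∀ y ∈ Icc (0:ℝ) x, A y = A 0 + (∫ z in Ioc (0:ℝ) y, g z ∂β₁.measure)
        - ∫ z in Ioc (0:ℝ) y, g z ∂β₂.measure := by
      intro y hy
      rw [hA0]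
      simp only [hAdef, stInt, if_pos hy.1]
      ring
    have hstep : (∫ z in Ioc (0:ℝ) x, Real.exp (-Sg z) ∂β₁.measure)
        - (∫ z in Ioc (0:ℝ) x, Real.exp (-Sg z) ∂β₂.measure)
          = σ 0 ^ 2 * (Real.exp (-2 * A 0) / 2 - Real.exp (-2 * A x) / 2) :=
      step σ hσc hσpos β₁ β₂ hβ₁ hβ₂ A (fun y => Real.exp (-Sg y)) he hx hA
    rw [hA0] at hstep
    rw [show (-2:ℝ) * 0 = 0 by ring, Real.exp_zero] at hstep
    simp only [stInt, if_pos hx]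
    rw [hstep, he x]
    have h2 : σ x ^ 2 ≠ 0 := (hσ2pos x).ne'
    have h3 : σ x ≠ 0 := (hσpos x).ne'
    field_simp
    ring
  · -- case x < 0
    have hgc : Continuous g := (hσc.pow 2).inv₀ (fun y => (hσ2pos y).ne')
    have hint : ∀ (γ : StieltjesFunction ℝ), IntegrableOn g (Ioc x 0) γ.measure :=
      fun γ => hgc.integrableOn_Ioc
    have hadd : ∀ (γ : StieltjesFunction ℝ), ∀ y ∈ Icc x (0:ℝ),
        (∫ z in Ioc x (0:ℝ), g z ∂γ.measure)
          = (∫ z in Ioc x y, g z ∂γ.measure) + ∫ z in Ioc y (0:ℝ), g z ∂γ.measure := by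
      intro γ y hy
      rw [← Ioc_union_Ioc_eq_Ioc hy.1 hy.2]
      exact setIntegral_union (Ioc_disjoint_Ioc_of_le le_rfl) measurableSet_Ioc
        ((hint γ).mono_set (Ioc_subset_Ioc_right hy.2))
        ((hint γ).mono_set (Ioc_subset_Ioc_left hy.1))
    have hAy : ∀ y ∈ Icc x (0:ℝ), A y
        = ((∫ z in Ioc x y, g z ∂β₁.measure) - ∫ z in Ioc x (0:ℝ), g z ∂β₁.measure)
          - ((∫ z in Ioc x y, g z ∂β₂.measure) - ∫ z in Ioc x (0:ℝ), g z ∂β₂.measure) := by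
      intro y hy
      rcases eq_or_lt_of_le hy.2 with rfl | hy0
      · simp [hA0]
      · have h1 := hadd β₁ y hy
        have h2 := hadd β₂ y hy
        simp only [hAdef, stInt, if_neg (not_le.mpr hy0)]
        linarith
    have hA : ∀ y ∈ Icc x (0:ℝ), A y = A x + (∫ z in Ioc x y, g z ∂β₁.measure)
        - ∫ z in Ioc x y, g z ∂β₂.measure := by
      intro y hy
      have h1 := hAy y hy
      have h2 := hAy x ⟨le_rfl, hx.le⟩
      simp only [Ioc_self, Measure.restrict_empty, integral_zero_measure] at h2
      linarith
    have hstep : (∫ z in Ioc x (0:ℝ), Real.exp (-Sg z) ∂β₁.measure)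
        - (∫ z in Ioc x (0:ℝ), Real.exp (-Sg z) ∂β₂.measure)
          = σ 0 ^ 2 * (Real.exp (-2 * A x) / 2 - Real.exp (-2 * A 0) / 2) :=
      step σ hσc hσpos β₁ β₂ hβ₁ hβ₂ A (fun y => Real.exp (-Sg y)) he hx.le hA
    rw [hA0] at hstep
    rw [show (-2:ℝ) * 0 = 0 by ring, Real.exp_zero] at hstep
    simp only [stInt, if_neg (not_le.mpr hx)]
    rw [show (-∫ z in Ioc x (0:ℝ), Real.exp (-Sg z) ∂β₁.measure)
          - -∫ z in Ioc x (0:ℝ), Real.exp (-Sg z) ∂β₂.measure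
        = -(σ 0 ^ 2 * (Real.exp (-2 * A x) / 2 - 1 / 2)) from by
          rw [← hstep]; ring, he x]
    have h2 : σ x ^ 2 ≠ 0 := (hσ2pos x).ne'
    have h3 : σ x ≠ 0 := (hσpos x).ne'
    field_simp
    ring

end
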